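/- The presheaf monad on quantale-enriched categories is simple (Theorem 4.2, quantale-enriched case): let f : (X,a) → (Y,b) be a V-functor between V-categories, Kf = {(φ,y) ∈ PX × Y | ∀ y' ∈ Y, ⨆_{x∈X} b(y', f x) ⊗ φ(x) ≤ b(y', y)} with V-category structure ã((φ,y),(φ',y')) = â(φ,φ') ⊓ b(y,y'), and Lf : X → Kf defined by Lf x = (a(−,x), f x). Then Lf is well defined (Lf x ∈ Kf for all x), and P(Lf) is left adjoint to μ_X ∘ P(q_f): for every presheaf Θ on (X,a) and every presheaf Ξ on (Kf, ã), (∀ (φ,y) ∈ Kf, ⨆_{x∈X} ( (â(φ, a(−,x)) ⊓ b(y, f x)) ⊗ Θ(x) ) ≤ Ξ(φ,y)) ⟺ (∀ x ∈ X, Θ(x) ≤ ⨆_{(φ,y)∈Kf} φ(x) ⊗ Ξ(φ,y)). -/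

import Mathlib

/-!
Context: `V` is a commutative unital quantale, modelled as a complete lattice
with a commutative monoid structure (unit `k = 1`, tensor `⊗ = *`) satisfying
the quantale distributivity law (`IsQuantale`).  The residuation `u ⇨ w` is
`sSup {v | u * v ≤ w}`.
-/

universe u v

variable {V : Type u}

/-- Residuation in a quantale: `u ⇨ w = sSup {v | u * v ≤ w}`. -/
noncomputable def resid [CompleteLattice V] [Mul V] (u w : V) : V :=
  sSup {v | u * v ≤ w}

/-- `(X, a)` is a `V`-category: `k ≤ a x x` and `a x y ⊗ a y z ≤ a x z`. -/
def IsVCat [CompleteLattice V] [CommMonoid V] {X : Type v} (a : X → X → V) : Prop :=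
  (∀ x, (1 : V) ≤ a x x) ∧ ∀ x y z, a x y * a y z ≤ a x z

/-- A presheaf on the `V`-category `(X, a)`: `a x x' ⊗ φ x' ≤ φ x`. -/
def IsPresheaf [CompleteLattice V] [Mul V] {X : Type v} (a : X → X → V) (φ : X → V) : Prop :=
  ∀ x x', a x x' * φ x' ≤ φ x

/-- The `V`-category structure on presheaves: `â(φ, ψ) = ⨅ x, (φ x ⇨ ψ x)`. -/
noncomputable def ahat [CompleteLattice V] [Mul V] {X : Type v} (φ ψ : X → V) : V :=
  ⨅ x, resid (φ x) (ψ x)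

/-- The comma object `K f = P f ↓ y_Y`: pairs `(φ, y)` with `φ` a presheaf on
`(X, a)` and `P f φ ≤ y^*`. -/
def KComma [CompleteLattice V] [CommMonoid V] {X Y : Type v}
    (a : X → X → V) (b : Y → Y → V) (f : X → Y) : Type (max u v) :=
  {p : (X → V) × Y //
    IsPresheaf a p.1 ∧ ∀ y', (⨆ x, b y' (f x) * p.1 x) ≤ b y' p.2}

section Aux

variable [CompleteLattice V] [CommMonoid V] [IsQuantale V]

theorem mul_resid_le' (u w : V) : u * resid u w ≤ w := by
  rw [resid, mul_sSup_distrib]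
  exact iSup₂_le fun v hv => hv

theorem le_resid' {u v w : V} (h : u * v ≤ w) : v ≤ resid u w :=
  le_sSup h

theorem one_le_resid_self (u : V) : (1 : V) ≤ resid u u :=
  le_resid' (by rw [mul_one])

end Aux

/-- The presheaf monad on `V`-categories is simple: `L f` is well defined and
`P (L f) ⊣ μ_X ∘ P (q_f)`, where `L f x = (a (−, x), f x)`. -/
theorem presheaf_monad_simple [CompleteLattice V] [CommMonoid V] [IsQuantale V]
    {X Y : Type v} (a : X → X → V) (b : Y → Y → V)
    (ha : IsVCat a) (hb : IsVCat b)
    (f : X → Y) (hf : ∀ x x', a x x' ≤ b (f x) (f x')) :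
    (∀ x : X, IsPresheaf a (fun x' => a x' x) ∧
      ∀ y', (⨆ x', b y' (f x') * a x' x) ≤ b y' (f x)) ∧
    (∀ Θ : X → V, IsPresheaf a Θ →
      ∀ Ξ : KComma a b f → V,
      IsPresheaf (fun p q : KComma a b f =>
        ahat p.1.1 q.1.1 ⊓ b p.1.2 q.1.2) Ξ →
      ((∀ p : KComma a b f,
          (⨆ x, (ahat p.1.1 (fun x' => a x' x) ⊓ b p.1.2 (f x)) * Θ x) ≤ Ξ p) ↔
        ∀ x, Θ x ≤ ⨆ p : KComma a b f, p.1.1 x * Ξ p)) := by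
  have hwd : ∀ x : X, IsPresheaf a (fun x' => a x' x) ∧
      ∀ y', (⨆ x', b y' (f x') * a x' x) ≤ b y' (f x) := by
    intro x
    refine ⟨fun x' x'' => ha.2 x' x'' x, fun y' => iSup_le fun x' => ?_⟩
    calc b y' (f x') * a x' x ≤ b y' (f x') * b (f x') (f x) :=
          mul_le_mul_right (hf x' x) _
      _ ≤ b y' (f x) := hb.2 y' (f x') (f x)
  refine ⟨hwd, fun Θ hΘ Ξ hΞ => ?_⟩
  constructor
  · intro H x
    set p : KComma a b f := ⟨⟨fun x' => a x' x, f x⟩, hwd x⟩ with hp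
    have h1 : Θ x ≤ Ξ p := by
      calc Θ x = ((1 : V) ⊓ 1) * Θ x := by rw [inf_idem, one_mul]
        _ ≤ (ahat p.1.1 (fun x' => a x' x) ⊓ b p.1.2 (f x)) * Θ x := by
            refine mul_le_mul_left (inf_le_inf ?_ ?_) _
            · exact le_iInf fun x' => one_le_resid_self _
            · exact hb.1 (f x)
        _ ≤ ⨆ x'', (ahat p.1.1 (fun x' => a x' x'') ⊓ b p.1.2 (f x'')) * Θ x'' :=
            le_iSup (fun x'' => (ahat p.1.1 (fun x' => a x' x'') ⊓ b p.1.2 (f x'')) * Θ x'') x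
        _ ≤ Ξ p := H p
    calc Θ x ≤ a x x * Ξ p := by
          calc Θ x = 1 * Θ x := (one_mul _).symm
            _ ≤ a x x * Ξ p := mul_le_mul' (ha.1 x) h1
      _ ≤ ⨆ q : KComma a b f, q.1.1 x * Ξ q :=
          le_iSup (fun q : KComma a b f => q.1.1 x * Ξ q) p
  · intro H q
    refine iSup_le fun x => ?_
    set c : V := ahat q.1.1 (fun x' => a x' x) ⊓ b q.1.2 (f x) with hc
    calc c * Θ x ≤ c * ⨆ p : KComma a b f, p.1.1 x * Ξ p :=
          mul_le_mul_right (H x) _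
      _ = ⨆ p : KComma a b f, c * (p.1.1 x * Ξ p) := Quantale.mul_iSup_distrib
      _ ≤ Ξ q := by
          refine iSup_le fun p => ?_
          have key : c * p.1.1 x ≤ ahat q.1.1 p.1.1 ⊓ b q.1.2 p.1.2 := by
            refine le_inf ?_ ?_
            · refine le_iInf fun x' => le_resid' ?_
              calc q.1.1 x' * (c * p.1.1 x)
                    ≤ q.1.1 x' * (resid (q.1.1 x') (a x' x) * p.1.1 x) := by
                      refine mul_le_mul_right (mul_le_mul_left ?_ _) _
                      exact le_trans inf_le_left (iInf_le _ x')
                _ = (q.1.1 x' * resid (q.1.1 x') (a x' x)) * p.1.1 x := (mul_assoc _ _ _).symm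
                _ ≤ a x' x * p.1.1 x := mul_le_mul_left (mul_resid_le' _ _) _
                _ ≤ p.1.1 x' := p.2.1 x' x
            · calc c * p.1.1 x ≤ b q.1.2 (f x) * p.1.1 x :=
                    mul_le_mul_left inf_le_right _
                _ ≤ ⨆ x'', b q.1.2 (f x'') * p.1.1 x'' :=
                    le_iSup (fun x'' => b q.1.2 (f x'') * p.1.1 x'') x
                _ ≤ b q.1.2 p.1.2 := p.2.2 q.1.2
          calc c * (p.1.1 x * Ξ p) = (c * p.1.1 x) * Ξ p := (mul_assoc _ _ _).symm
            _ ≤ (ahat q.1.1 p.1.1 ⊓ b q.1.2 p.1.2) * Ξ p := mul_le_mul_left key _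
            _ ≤ Ξ q := hΞ q p
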